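/- arXiv:1809.08025 — 3 statements merged into one kernel-verified Lean document; each statement's English description precedes it below -/
import Mathlib

section
/- Under the hypotheses of the power balance law, the functional M(t) = (e^{−2γt}/N) ∑_{n=0}^{N-1} |ψ_n(t)|² satisfies dM/dt = (2δ e^{−2γt}/N) ∑_{n=0}^{N-1} |ψ_n(t)|⁴. -/
open Complex Finset

private lemma shift_sum (N : ℕ) (F : ℤ → ℂ) (hF : ∀ n : ℤ, F (n + N) = F n) :
    ∑ n ∈ Finset.range N, F ((n : ℤ) + 1) = ∑ n ∈ Finset.range N, F (n : ℤ) := by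
  have h1 : ∑ n ∈ Finset.range N, F ((n : ℤ) + 1)
      = ∑ n ∈ Finset.range N, (fun i : ℕ => F (i : ℤ)) (n + 1) := by
    apply Finset.sum_congr rfl; intro n _; push_cast; ring_nf
  have h2 := Finset.sum_range_succ' (fun i : ℕ => F (i : ℤ)) N
  have h3 := Finset.sum_range_succ (fun i : ℕ => F (i : ℤ)) N
  have hFN : F ((N : ℕ) : ℤ) = F 0 := by simpa using hF 0
  rw [h1]
  linear_combination h3 - h2 + hFN

theorem dnls_M_functional_derivative (N : ℕ) (hN : 1 ≤ N) (T : ℝ) (hT : 0 ≤ T)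
    (s : ℝ) (hs : s = 1 ∨ s = -1) (k γ δ : ℝ) (hk : 0 < k)
    (ψ ψ' : ℝ → ℤ → ℂ)
    (hper : ∀ t ∈ Set.Icc 0 T, ∀ n : ℤ, ψ t (n + N) = ψ t n)
    (hderiv : ∀ t ∈ Set.Icc 0 T, ∀ n : ℤ,
      HasDerivWithinAt (fun τ => ψ τ n) (ψ' t n) (Set.Icc 0 T) t)
    (heq : ∀ t ∈ Set.Icc 0 T, ∀ n : ℤ,
      Complex.I * ψ' t n - (s : ℂ) * (k : ℂ) * (ψ t (n + 1) - 2 * ψ t n + ψ t (n - 1)) +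
          (‖ψ t n‖ : ℂ) ^ 2 * ψ t n =
        Complex.I * (γ : ℂ) * ψ t n +
          Complex.I * (δ : ℂ) * (‖ψ t n‖ : ℂ) ^ 2 * ψ t n) :
    ∀ t ∈ Set.Icc 0 T,
      HasDerivWithinAt
        (fun τ => Real.exp (-2 * γ * τ) / N *
          ∑ n ∈ Finset.range N, ‖ψ τ (n : ℤ)‖ ^ 2)
        (2 * δ * Real.exp (-2 * γ * t) / N *
          ∑ n ∈ Finset.range N, ‖ψ t (n : ℤ)‖ ^ 4)
        (Set.Icc 0 T) t := by
  intro t ht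
  have hP : ∀ n : ℤ, ψ t (n + N) = ψ t n := hper t ht
  -- explicit formula for the time derivative
  have hP' : ∀ n : ℤ, ψ' t n =
      -Complex.I * ((s : ℂ) * (k : ℂ)) * (ψ t (n+1) - 2 * ψ t n + ψ t (n-1))
      + Complex.I * ((‖ψ t n‖ : ℂ)) ^ 2 * ψ t n
      + (γ : ℂ) * ψ t n + (δ : ℂ) * ((‖ψ t n‖ : ℂ)) ^ 2 * ψ t n := by
    intro n
    have h := heq t ht n
    have hI : (Complex.I) ^ 2 = -1 := Complex.I_sq
    linear_combination (-Complex.I) * h +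
      (ψ' t n - (γ : ℂ) * ψ t n - (δ : ℂ) * ((‖ψ t n‖ : ℂ)) ^ 2 * ψ t n) * hI
  -- derivative of the sum of squared moduli
  have hSd : HasDerivWithinAt
      (fun τ => ∑ n ∈ Finset.range N, ‖ψ τ (n : ℤ)‖ ^ 2)
      (∑ n ∈ Finset.range N,
        (ψ' t (n : ℤ) * (starRingEnd ℂ) (ψ t (n : ℤ))
          + ψ t (n : ℤ) * (starRingEnd ℂ) (ψ' t (n : ℤ))).re) (Set.Icc 0 T) t := by
    apply HasDerivWithinAt.fun_sum
    intro n _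
    have hmul : HasDerivWithinAt (fun τ => ψ τ (n : ℤ) * (starRingEnd ℂ) (ψ τ (n : ℤ)))
        (ψ' t n * (starRingEnd ℂ) (ψ t (n : ℤ)) + ψ t (n : ℤ) * (starRingEnd ℂ) (ψ' t (n : ℤ)))
        (Set.Icc 0 T) t :=
      (hderiv t ht n).mul ((hderiv t ht n).star)
    have hre := (Complex.reCLM.hasFDerivAt).comp_hasDerivWithinAt t hmul
    apply hre.congr
    · intro y _
      simp [Complex.mul_conj, ← Complex.sq_norm, ← Complex.ofReal_pow]
    · simp [Complex.mul_conj, ← Complex.sq_norm, ← Complex.ofReal_pow]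
  -- key algebraic identity for the derivative of the sum
  have hterm : ∀ n : ℤ,
      ψ' t n * (starRingEnd ℂ) (ψ t n) + ψ t n * (starRingEnd ℂ) (ψ' t n)
      = (-Complex.I * ((s : ℂ) * k)) * (ψ t (n+1) * (starRingEnd ℂ) (ψ t n))
      + (Complex.I * ((s : ℂ) * k)) * (ψ t n * (starRingEnd ℂ) (ψ t (n+1)))
      + (-Complex.I * ((s : ℂ) * k)) * (ψ t (n-1) * (starRingEnd ℂ) (ψ t n))
      + (Complex.I * ((s : ℂ) * k)) * (ψ t n * (starRingEnd ℂ) (ψ t (n-1)))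
      + 2 * (γ : ℂ) * ((‖ψ t n‖ : ℂ)) ^ 2
      + 2 * (δ : ℂ) * ((‖ψ t n‖ : ℂ)) ^ 4 := by
    intro n
    have hm : ψ t n * (starRingEnd ℂ) (ψ t n) = ((‖ψ t n‖ : ℂ)) ^ 2 := by
      rw [Complex.mul_conj]
      norm_cast
      rw [Complex.sq_norm]
    rw [hP' n]
    simp only [map_add, map_mul, map_sub, map_neg, map_pow, Complex.conj_I,
      Complex.conj_ofReal, map_ofNat]
    linear_combination (2 * (γ : ℂ) + 2 * (δ : ℂ) * ((‖ψ t n‖ : ℂ)) ^ 2) * hm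
  -- shift identities
  have hz1 : ∑ n ∈ Finset.range N, ψ t ((n : ℤ) + 1) * (starRingEnd ℂ) (ψ t (n : ℤ))
      = ∑ n ∈ Finset.range N, ψ t (n : ℤ) * (starRingEnd ℂ) (ψ t ((n : ℤ) - 1)) := by
    have hper' : ∀ m : ℤ, ψ t (m + N) * (starRingEnd ℂ) (ψ t (m + N - 1))
        = ψ t m * (starRingEnd ℂ) (ψ t (m - 1)) := by
      intro m
      have e : (m : ℤ) + N - 1 = (m - 1) + N := by ring
      rw [e, hP, hP]
    have := shift_sum N (fun m => ψ t m * (starRingEnd ℂ) (ψ t (m - 1))) hper'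
    rw [← this]
    apply Finset.sum_congr rfl
    intro n _
    simp [add_sub_cancel_right]
  have hz2 : ∑ n ∈ Finset.range N, ψ t (n : ℤ) * (starRingEnd ℂ) (ψ t ((n : ℤ) + 1))
      = ∑ n ∈ Finset.range N, ψ t ((n : ℤ) - 1) * (starRingEnd ℂ) (ψ t (n : ℤ)) := by
    have hper' : ∀ m : ℤ, ψ t (m + N - 1) * (starRingEnd ℂ) (ψ t (m + N))
        = ψ t (m - 1) * (starRingEnd ℂ) (ψ t m) := by
      intro m
      have e : (m : ℤ) + N - 1 = (m - 1) + N := by ring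
      rw [e, hP, hP]
    have := shift_sum N (fun m => ψ t (m - 1) * (starRingEnd ℂ) (ψ t m)) hper'
    rw [← this]
    apply Finset.sum_congr rfl
    intro n _
    simp [add_sub_cancel_right]
  -- complex sum identity
  have hsum_c : ∑ n ∈ Finset.range N,
      (ψ' t (n : ℤ) * (starRingEnd ℂ) (ψ t (n : ℤ)) + ψ t (n : ℤ) * (starRingEnd ℂ) (ψ' t (n : ℤ)))
      = ((2 * γ * ∑ n ∈ Finset.range N, ‖ψ t (n : ℤ)‖ ^ 2
          + 2 * δ * ∑ n ∈ Finset.range N, ‖ψ t (n : ℤ)‖ ^ 4 : ℝ) : ℂ) := by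
    refine (Finset.sum_congr rfl fun (n : ℕ) (_ : n ∈ Finset.range N) => hterm (n : ℤ)).trans ?_
    push_cast
    simp only [Finset.sum_add_distrib, ← Finset.mul_sum]
    rw [hz1, hz2]
    ring
  have hkey : (∑ n ∈ Finset.range N,
      (ψ' t (n : ℤ) * (starRingEnd ℂ) (ψ t (n : ℤ))
        + ψ t (n : ℤ) * (starRingEnd ℂ) (ψ' t (n : ℤ))).re)
      = 2 * γ * ∑ n ∈ Finset.range N, ‖ψ t (n : ℤ)‖ ^ 2
        + 2 * δ * ∑ n ∈ Finset.range N, ‖ψ t (n : ℤ)‖ ^ 4 := by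
    rw [← Complex.re_sum, hsum_c, Complex.ofReal_re]
  -- exponential factor
  have hexp : HasDerivWithinAt (fun τ : ℝ => Real.exp (-2 * γ * τ))
      (Real.exp (-2 * γ * t) * (-2 * γ)) (Set.Icc 0 T) t := by
    have h1 : HasDerivAt (fun τ : ℝ => -2 * γ * τ) (-2 * γ) t := by
      simpa using (hasDerivAt_id t).const_mul (-2 * γ)
    exact (h1.exp).hasDerivWithinAt
  have hprod := (hexp.div_const (N : ℝ)).mul hSd
  refine hprod.congr_deriv ?_
  rw [hkey]
  ring
end

section
/- Let M : [0,T] → ℝ be C¹, positive, satisfy M(0) > 0 and the differential inequality 2δ e^{2γt} M(t)² ≤ M'(t) for all t ∈ [0,T], with δ > 0 and γ ≠ 0 with γ > −δ M(0). Then T ≤ (1/(2γ)) · ln(1 + γ/(δ M(0))). -/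
theorem collapse_upper_bound (T γ δ : ℝ) (hT : 0 ≤ T) (hδ : 0 < δ) (hγ : γ ≠ 0)
    (M M' : ℝ → ℝ)
    (hpos : ∀ t ∈ Set.Icc 0 T, 0 < M t)
    (hM0 : 0 < M 0)
    (hγstar : γ > -δ * M 0)
    (hderiv : ∀ t ∈ Set.Icc 0 T, HasDerivWithinAt M (M' t) (Set.Icc 0 T) t)
    (hineq : ∀ t ∈ Set.Icc 0 T, 2 * δ * Real.exp (2 * γ * t) * M t ^ 2 ≤ M' t) :
    T ≤ 1 / (2 * γ) * Real.log (1 + γ / (δ * M 0)) := by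
  set g : ℝ → ℝ := fun t => (M t)⁻¹ + (δ / γ) * Real.exp (2 * γ * t) with hg
  have hint : interior (Set.Icc (0:ℝ) T) = Set.Ioo 0 T := interior_Icc
  have hMcont : ContinuousOn M (Set.Icc 0 T) := fun x hx =>
    (hderiv x hx).continuousWithinAt
  have hgcont : ContinuousOn g (Set.Icc 0 T) := by
    apply ContinuousOn.add
    · exact ContinuousOn.inv₀ hMcont (fun x hx => (hpos x hx).ne')
    · exact (Continuous.continuousOn (by continuity))
  have hanti : AntitoneOn g (Set.Icc 0 T) := by
    apply antitoneOn_of_hasDerivWithinAt_nonpos (convex_Icc 0 T) hgcont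
      (f' := fun t => -(M' t) / (M t)^2 + (δ/γ) * (Real.exp (2*γ*t) * (2*γ)))
    · intro x hx
      rw [hint] at hx
      have hxI : x ∈ Set.Icc 0 T := Set.Ioo_subset_Icc_self hx
      have hM : HasDerivWithinAt M (M' x) (interior (Set.Icc 0 T)) x :=
        (hderiv x hxI).mono interior_subset
      have h1 : HasDerivWithinAt (fun t => (M t)⁻¹) (-(M' x) / (M x)^2)
          (interior (Set.Icc 0 T)) x := hM.inv (hpos x hxI).ne'
      have h2 : HasDerivWithinAt (fun t => (δ/γ) * Real.exp (2*γ*t))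
          ((δ/γ) * (Real.exp (2*γ*x) * (2*γ))) (interior (Set.Icc 0 T)) x := by
        have : HasDerivAt (fun t : ℝ => Real.exp (2*γ*t)) (Real.exp (2*γ*x) * (2*γ)) x := by
          have := (hasDerivAt_id x).const_mul (2*γ)
          simpa [Function.comp_def] using (Real.hasDerivAt_exp (2*γ*x)).comp x this
        exact ((this.const_mul (δ/γ)).hasDerivWithinAt)
      exact h1.add h2
    · intro x hx
      rw [hint] at hx
      have hxI : x ∈ Set.Icc 0 T := Set.Ioo_subset_Icc_self hx
      have hMx := hpos x hxI
      have h := hineq x hxI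
      have hexp : (0:ℝ) < Real.exp (2*γ*x) := Real.exp_pos _
      have key : (δ/γ) * (Real.exp (2*γ*x) * (2*γ)) = 2 * δ * Real.exp (2*γ*x) := by
        field_simp
      rw [key]
      have : 2 * δ * Real.exp (2*γ*x) * (M x)^2 ≤ M' x := h
      have h2 : 2 * δ * Real.exp (2*γ*x) ≤ M' x / (M x)^2 := by
        rw [le_div_iff₀ (by positivity)]; linarith
      have : -(M' x) / (M x)^2 = -(M' x / (M x)^2) := by ring
      rw [this]; linarith
  have hT0 : (0:ℝ) ∈ Set.Icc (0:ℝ) T := ⟨le_refl 0, hT⟩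
  have hTT : T ∈ Set.Icc (0:ℝ) T := ⟨hT, le_refl T⟩
  have hgle : g T ≤ g 0 := hanti hT0 hTT hT
  have hMT : 0 < M T := hpos T hTT
  have hkey : (δ/γ) * Real.exp (2*γ*T) < (M 0)⁻¹ + δ/γ := by
    have : (M T)⁻¹ + (δ/γ) * Real.exp (2*γ*T) ≤ (M 0)⁻¹ + (δ/γ) * Real.exp (2*γ*0) := hgle
    have hE0 : Real.exp (2*γ*0) = 1 := by norm_num
    rw [hE0] at this
    have hMTinv : 0 < (M T)⁻¹ := by positivity
    linarith
  have hδM0 : 0 < δ * M 0 := by positivity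
  have hbase : 0 < 1 + γ / (δ * M 0) := by
    have h1 : -1 < γ / (δ * M 0) := by
      rw [neg_lt, ← neg_div, div_lt_one hδM0]; linarith
    linarith
  rcases lt_or_gt_of_ne hγ with hγneg | hγpos
  · -- γ < 0
    have hδγ : δ/γ < 0 := div_neg_of_pos_of_neg hδ hγneg
    have hexpgt : 1 + γ / (δ * M 0) < Real.exp (2*γ*T) := by
      have h1 : (M 0)⁻¹ + δ/γ < (δ/γ) * Real.exp (2*γ*T) → False := fun h => absurd hkey (not_lt.2 h.le)
      -- divide hkey by δ/γ < 0
      have := (div_lt_div_right_of_neg hδγ).mpr hkey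
      -- careful: need manual
      have h2 : ((M 0)⁻¹ + δ/γ) / (δ/γ) < Real.exp (2*γ*T) := by
        rw [div_lt_iff_of_neg hδγ]
        linarith [hkey]
      have h3 : ((M 0)⁻¹ + δ/γ) / (δ/γ) = 1 + γ / (δ * M 0) := by
        field_simp
        try ring
      linarith [h3 ▸ h2]
    have hlog : Real.log (1 + γ / (δ * M 0)) < 2*γ*T :=
      (Real.log_lt_iff_lt_exp hbase).mpr hexpgt
    have h2γ : 2*γ < 0 := by linarith
    rw [← sub_nonneg]
    have heq : 1 / (2 * γ) * Real.log (1 + γ / (δ * M 0)) - T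
        = (Real.log (1 + γ / (δ * M 0)) - 2*γ*T) / (2*γ) := by
      field_simp
    rw [heq]
    exact le_of_lt (div_pos_of_neg_of_neg (by linarith) h2γ)
  · -- γ > 0
    have hδγ : 0 < δ/γ := div_pos hδ hγpos
    have hexplt : Real.exp (2*γ*T) < 1 + γ / (δ * M 0) := by
      have h2 : Real.exp (2*γ*T) < ((M 0)⁻¹ + δ/γ) / (δ/γ) := by
        rw [lt_div_iff₀ hδγ]
        linarith [hkey]
      have h3 : ((M 0)⁻¹ + δ/γ) / (δ/γ) = 1 + γ / (δ * M 0) := by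
        field_simp
        try ring
      linarith [h3 ▸ h2]
    have hlog : 2*γ*T < Real.log (1 + γ / (δ * M 0)) :=
      (Real.lt_log_iff_exp_lt hbase).mpr hexplt
    have h2γ : 0 < 2*γ := by linarith
    rw [← sub_nonneg]
    have heq : 1 / (2 * γ) * Real.log (1 + γ / (δ * M 0)) - T
        = (Real.log (1 + γ / (δ * M 0)) - 2*γ*T) / (2*γ) := by
      field_simp
    rw [heq]
    exact le_of_lt (div_pos (by linarith) h2γ)
end

section
/- Let γ ≠ 0, δ > 0, c > 0 with γ + δc > 0, and define x(t) = γ c / (γ + δc − δc e^{2γt}). Then x solves the initial value problem x'(t) = 2δ e^{2γt} x(t)², x(0) = c, on the interval [0, T*), where T* = (1/(2γ)) ln(1 + γ/(δc)), and x(t) → +∞ as t → T*⁻. -/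
theorem explicit_ode_solution_blowup (γ δ c : ℝ) (hδ : 0 < δ) (hγ : γ ≠ 0) (hc : 0 < c)
    (hsum : 0 < γ + δ * c) :
    (∀ t ∈ Set.Ico (0 : ℝ) (1 / (2 * γ) * Real.log (1 + γ / (δ * c))),
      HasDerivAt (fun τ => γ * c / (γ + δ * c - δ * c * Real.exp (2 * γ * τ)))
        (2 * δ * Real.exp (2 * γ * t) *
          (γ * c / (γ + δ * c - δ * c * Real.exp (2 * γ * t))) ^ 2) t) ∧
    γ * c / (γ + δ * c - δ * c * Real.exp (2 * γ * 0)) = c ∧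
    Filter.Tendsto (fun t => γ * c / (γ + δ * c - δ * c * Real.exp (2 * γ * t)))
      (nhdsWithin (1 / (2 * γ) * Real.log (1 + γ / (δ * c)))
        (Set.Iio (1 / (2 * γ) * Real.log (1 + γ / (δ * c))))) Filter.atTop := by
  have hδc : 0 < δ * c := mul_pos hδ hc
  have h2γ : (2 : ℝ) * γ ≠ 0 := by
    simp [hγ]
  set T : ℝ := 1 / (2 * γ) * Real.log (1 + γ / (δ * c)) with hT
  have h1 : (0 : ℝ) < 1 + γ / (δ * c) := by
    have h : 1 + γ / (δ * c) = (γ + δ * c) / (δ * c) := by field_simp; ring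
    rw [h]; positivity
  have hexpT : Real.exp (2 * γ * T) = 1 + γ / (δ * c) := by
    rw [hT, show 2 * γ * (1 / (2 * γ) * Real.log (1 + γ / (δ * c)))
        = Real.log (1 + γ / (δ * c)) by field_simp]
    exact Real.exp_log h1
  have hkey : δ * c * Real.exp (2 * γ * T) = γ + δ * c := by
    rw [hexpT]; field_simp; ring
  -- denominator nonzero for t < T
  have hne : ∀ t : ℝ, t < T → γ + δ * c - δ * c * Real.exp (2 * γ * t) ≠ 0 := by
    intro t ht h0
    have he : Real.exp (2 * γ * t) = Real.exp (2 * γ * T) := by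
      have : δ * c * Real.exp (2 * γ * t) = δ * c * Real.exp (2 * γ * T) := by linarith
      exact mul_left_cancel₀ (ne_of_gt hδc) this
    have : 2 * γ * t = 2 * γ * T := Real.exp_injective he
    have : t = T := mul_left_cancel₀ h2γ this
    exact absurd this (ne_of_lt ht)
  refine ⟨?_, ?_, ?_⟩
  · -- derivative
    intro t ht
    have htT : t < T := ht.2
    have hD : γ + δ * c - δ * c * Real.exp (2 * γ * t) ≠ 0 := hne t htT
    have h1' : HasDerivAt (fun τ : ℝ => 2 * γ * τ) (2 * γ) t := by
      simpa using (hasDerivAt_id t).const_mul (2 * γ)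
    have h2' : HasDerivAt (fun τ : ℝ => Real.exp (2 * γ * τ))
        (Real.exp (2 * γ * t) * (2 * γ)) t := h1'.exp
    have hDd : HasDerivAt (fun τ : ℝ => γ + δ * c - δ * c * Real.exp (2 * γ * τ))
        (-(δ * c * (Real.exp (2 * γ * t) * (2 * γ)))) t :=
      (h2'.const_mul (δ * c)).const_sub (γ + δ * c)
    have hdiv : HasDerivAt (fun τ => γ * c / (γ + δ * c - δ * c * Real.exp (2 * γ * τ))) _ t :=
      (hasDerivAt_const t (γ * c)).div hDd hD
    convert hdiv using 1
    field_simp [hD]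
    ring
  · simp
    field_simp
  · -- blowup
    have hDT : γ + δ * c - δ * c * Real.exp (2 * γ * T) = 0 := by linarith
    have hcont : Continuous (fun t : ℝ =>
        (γ + δ * c - δ * c * Real.exp (2 * γ * t)) / (γ * c)) := by fun_prop
    have h0 : Filter.Tendsto (fun t : ℝ =>
        (γ + δ * c - δ * c * Real.exp (2 * γ * t)) / (γ * c))
        (nhdsWithin T (Set.Iio T)) (nhds 0) := by
      have := (hcont.tendsto T).mono_left (nhdsWithin_le_nhds (s := Set.Iio T))
      simpa [hDT] using this
    have hpos : ∀ t ∈ Set.Iio T,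
        0 < (γ + δ * c - δ * c * Real.exp (2 * γ * t)) / (γ * c) := by
      intro t ht
      have hDt : γ + δ * c - δ * c * Real.exp (2 * γ * t)
          = δ * c * (Real.exp (2 * γ * T) - Real.exp (2 * γ * t)) := by
        rw [mul_sub]; linarith
      rcases hγ.lt_or_gt with hγn | hγp
      · have : Real.exp (2 * γ * T) < Real.exp (2 * γ * t) := by
          apply Real.exp_lt_exp.mpr
          nlinarith [Set.mem_Iio.mp ht]
        apply div_pos_of_neg_of_neg
        · rw [hDt]; nlinarith
        · nlinarith
      · have : Real.exp (2 * γ * t) < Real.exp (2 * γ * T) := by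
          apply Real.exp_lt_exp.mpr
          nlinarith [Set.mem_Iio.mp ht]
        apply div_pos
        · rw [hDt]; nlinarith
        · nlinarith
    have h1' : Filter.Tendsto (fun t : ℝ =>
        (γ + δ * c - δ * c * Real.exp (2 * γ * t)) / (γ * c))
        (nhdsWithin T (Set.Iio T)) (nhdsWithin 0 (Set.Ioi 0)) := by
      rw [tendsto_nhdsWithin_iff]
      exact ⟨h0, Filter.eventually_of_mem self_mem_nhdsWithin fun t ht => hpos t ht⟩
    have h2' := h1'.inv_tendsto_nhdsGT_zero
    rw [Pi.inv_def] at h2'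
    have heq : (fun t : ℝ =>
        ((γ + δ * c - δ * c * Real.exp (2 * γ * t)) / (γ * c))⁻¹)
        = fun t : ℝ => γ * c / (γ + δ * c - δ * c * Real.exp (2 * γ * t)) := by
      funext t; rw [inv_div]
    rwa [heq] at h2'
end
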